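/- For NIM with subtraction set A = {1, L} where L is even and L ≥ 2, the second player wins the game with n stones if and only if n mod (L+1) is an even number in {0, 2, 4, ..., L-2}. -/
import Mathlib


/-- NIM({1,L};n), L even ≥ 2: second player wins iff n mod (L+1) is an even
number in {0,2,...,L-2}. -/
theorem nim_one_L_even (L : ℕ) (hL : Even L) (hL2 : 2 ≤ L)
    (P : ℕ → Prop)
    (hP : ∀ n, P n ↔ ∀ a ∈ ({1, L} : Finset ℕ), a ≤ n → ¬ P (n - a)) :
    ∀ n, P n ↔ (Even (n % (L + 1)) ∧ n % (L + 1) ≤ L - 2) := by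
  have hLmod : L % 2 = 0 := Nat.even_iff.mp hL
  have key1 : ∀ k, 1 ≤ k → (k - 1) % (L + 1) = (k % (L + 1) + L) % (L + 1) := by
    intro k hk
    rw [← Nat.add_mod_right (k - 1) (L + 1), show k - 1 + (L + 1) = k + L from by omega,
      Nat.add_mod, Nat.mod_eq_of_lt (show L < L + 1 by omega)]
  have key2 : ∀ k, L ≤ k → (k - L) % (L + 1) = (k % (L + 1) + 1) % (L + 1) := by
    intro k hk
    rw [← Nat.add_mod_right (k - L) (L + 1), show k - L + (L + 1) = k + 1 from by omega,
      Nat.add_mod, Nat.mod_eq_of_lt (show 1 < L + 1 by omega)]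
  intro n
  induction n using Nat.strong_induction_on with
  | _ n ih =>
    rw [hP n]
    have hsplit : (∀ a ∈ ({1, L} : Finset ℕ), a ≤ n → ¬ P (n - a)) ↔
        ((1 ≤ n → ¬ P (n - 1)) ∧ (L ≤ n → ¬ P (n - L))) := by
      constructor
      · intro h; exact ⟨h 1 (by simp), h L (by simp)⟩
      · rintro ⟨h1, h2⟩ a ha
        simp only [Finset.mem_insert, Finset.mem_singleton] at ha
        rcases ha with rfl | rfl
        · exact h1
        · exact h2
    rw [hsplit]
    rcases Nat.eq_zero_or_pos n with rfl | hn
    · simp only [Nat.zero_mod]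
      constructor
      · intro _; exact ⟨Even.zero, by omega⟩
      · intro _
        exact ⟨fun h => absurd h (by omega), fun h => absurd h (by omega)⟩
    · have ih1 := ih (n - 1) (by omega)
      have e1 := key1 n hn
      rw [ih1, e1]
      have hrlt : n % (L + 1) < L + 1 := Nat.mod_lt _ (by omega)
      by_cases hnL : L ≤ n
      · have ih2 := ih (n - L) (by omega)
        have e2 := key2 n hnL
        rw [ih2, e2]
        rcases Nat.eq_zero_or_pos (n % (L + 1)) with hr0 | hr1
        · have v1 : (n % (L + 1) + L) % (L + 1) = L := by
            rw [hr0, Nat.zero_add, Nat.mod_eq_of_lt (by omega)]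
          have v2 : (n % (L + 1) + 1) % (L + 1) = 1 := by
            rw [hr0, Nat.zero_add, Nat.mod_eq_of_lt (by omega)]
          rw [v1, v2]
          simp only [Nat.even_iff]
          omega
        · have v1 : (n % (L + 1) + L) % (L + 1) = n % (L + 1) - 1 := by
            rw [show n % (L + 1) + L = (L + 1) + (n % (L + 1) - 1) from by omega,
              Nat.add_mod_left, Nat.mod_eq_of_lt (by omega)]
          rcases eq_or_ne (n % (L + 1)) L with hrL | hrL
          · have v2 : (n % (L + 1) + 1) % (L + 1) = 0 := by
              rw [show n % (L + 1) + 1 = L + 1 from by omega, Nat.mod_self]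
            rw [v1, v2]
            simp only [Nat.even_iff, true_and]
            omega
          · have v2 : (n % (L + 1) + 1) % (L + 1) = n % (L + 1) + 1 :=
              Nat.mod_eq_of_lt (by omega)
            rw [v1, v2]
            simp only [Nat.even_iff]
            omega
      · have hrn : n % (L + 1) = n := Nat.mod_eq_of_lt (by omega)
        have v1 : (n % (L + 1) + L) % (L + 1) = n - 1 := by
          rw [hrn, show n + L = (L + 1) + (n - 1) from by omega,
            Nat.add_mod_left, Nat.mod_eq_of_lt (by omega)]
        have hvac : (L ≤ n → ¬ P (n - L)) ↔ True :=
          iff_true_intro (fun h => absurd h hnL)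
        rw [v1, hvac, and_true, hrn]
        simp only [Nat.even_iff]
        omega
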